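/- For all integers m ≥ 1, r ≥ 0, and n ≥ 1: S_{2m}^{(r+1)}(n) = (1/2) · S_{2m}^{(r)}(n) + (1/(2m+1)) · Σ_{k=1}^{m+1} C(2m+1, 2k−1) · B_{2m+2−2k} · S_{2k-1}^{(r)}(n), where B_j denotes the Bernoulli numbers. -/

import Mathlib

open Finset

/-- Hyper-sum of powers of integers: `S m 0 n = n^m` and
`S m (r+1) n = ∑ i in [1..n], S m r i`. -/
def S (m : ℕ) : ℕ → ℕ → ℚ
  | 0, n => (n : ℚ) ^ m
  | r + 1, n => ∑ i ∈ Finset.Icc 1 n, S m r i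

lemma icc_to_range (f : ℕ → ℚ) (a n : ℕ) :
    ∑ i ∈ Finset.Icc a n, f i = ∑ i ∈ Finset.range (n + 1 - a), f (a + i) := by
  rw [← Finset.Ico_add_one_right_eq_Icc, Finset.sum_Ico_eq_sum_range]

lemma bernoulli_odd_zero {i : ℕ} (h : Odd i) (h1 : 1 < i) : bernoulli i = 0 := by
  rw [bernoulli_eq_bernoulli'_of_ne_one (by omega)]
  exact bernoulli'_eq_zero_of_odd h h1

lemma even_sum (m : ℕ) (h : ℕ → ℚ) :
    ∑ i ∈ (Finset.range (2 * m + 1)).filter (fun i => Even i), h i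
      = ∑ j ∈ Finset.range (m + 1), h (2 * j) := by
  refine (Finset.sum_nbij' (fun j => 2 * j) (fun i => i / 2) ?_ ?_ ?_ ?_ ?_).symm
  · intro j hj
    simp only [Finset.mem_filter, Finset.mem_range] at hj ⊢
    exact ⟨by omega, ⟨j, by omega⟩⟩
  · intro i hi
    simp only [Finset.mem_filter, Finset.mem_range] at hi ⊢
    omega
  · intro j _; show 2 * j / 2 = j; omega
  · intro i hi
    simp only [Finset.mem_filter, Finset.mem_range] at hi
    obtain ⟨_, k, hk⟩ := hi; show 2 * (i / 2) = i; omega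
  · intro j _; rfl

lemma base_case (m n : ℕ) (hm : 1 ≤ m) :
    ∑ i ∈ Finset.Icc 1 n, (i : ℚ) ^ (2 * m)
      = (1 / 2) * (n : ℚ) ^ (2 * m)
        + (1 / (2 * (m : ℚ) + 1)) * ∑ k ∈ Finset.Icc 1 (m + 1),
            ((2 * m + 1).choose (2 * k - 1) : ℚ) * bernoulli (2 * m + 2 - 2 * k)
              * (n : ℚ) ^ (2 * k - 1) := by
  have hne : (2 * (m : ℚ) + 1) ≠ 0 := by positivity
  -- left side to range sum
  have h1 : ∑ i ∈ Finset.Icc 1 n, (i : ℚ) ^ (2 * m)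
      = ∑ i ∈ Finset.range n, (i : ℚ) ^ (2 * m) + (n : ℚ) ^ (2 * m) := by
    rcases Nat.eq_zero_or_pos n with rfl | hn
    · norm_num [zero_pow (show 2 * m ≠ 0 by omega)]
    · rw [← Finset.sum_range_succ]
      rw [icc_to_range (fun i => (i : ℚ) ^ (2 * m)) 1 n, Finset.sum_range_succ']
      rw [Nat.cast_zero, zero_pow (show 2 * m ≠ 0 by omega), add_zero]
      refine Finset.sum_congr (by norm_num) (fun i _ => by rw [Nat.add_comm 1 i])
  rw [h1, sum_range_pow]
  set h : ℕ → ℚ := fun i =>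
    bernoulli i * ((2 * m + 1).choose i : ℚ) * (n : ℚ) ^ (2 * m + 1 - i) / (2 * (m : ℚ) + 1)
    with hh
  have hsum : ∑ i ∈ Finset.range (2 * m + 1),
      bernoulli i * ((2 * m + 1).choose i : ℚ) * (n : ℚ) ^ (2 * m + 1 - i) / ((2 * m : ℕ) + 1 : ℚ)
      = ∑ i ∈ Finset.range (2 * m + 1), h i := by
    apply Finset.sum_congr rfl; intro i _
    rw [hh]; push_cast; ring
  rw [hsum]
  rw [← Finset.sum_filter_add_sum_filter_not (Finset.range (2 * m + 1)) (fun i => Even i) h]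
  -- odd part equals h 1
  have hodd : ∑ i ∈ (Finset.range (2 * m + 1)).filter (fun i => ¬ Even i), h i
      = -(1/2) * (n : ℚ) ^ (2 * m) := by
    have e1 : ∑ i ∈ (Finset.range (2 * m + 1)).filter (fun i => ¬ Even i), h i = h 1 := by
      apply Finset.sum_eq_single_of_mem
      · simp only [Finset.mem_filter, Finset.mem_range]
        exact ⟨by omega, by simp [Nat.even_iff]⟩
      · intro b hb hb1
        simp only [Finset.mem_filter, Finset.mem_range, Nat.not_even_iff_odd] at hb
        have : bernoulli b = 0 := bernoulli_odd_zero hb.2 (by rcases hb.2 with ⟨k, hk⟩; omega)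
        simp [hh, this]
    rw [e1, hh]
    simp only [bernoulli_one, Nat.choose_one_right]
    have h2 : 2 * m + 1 - 1 = 2 * m := by omega
    rw [h2]
    push_cast
    field_simp
  rw [hodd, even_sum m h]
  -- reflect the even sum
  rw [← Finset.sum_range_reflect (fun j => h (2 * j)) (m + 1)]
  -- right side Icc to range
  rw [icc_to_range (fun k => ((2 * m + 1).choose (2 * k - 1) : ℚ) * bernoulli (2 * m + 2 - 2 * k)
      * (n : ℚ) ^ (2 * k - 1)) 1 (m + 1)]
  have h3 : m + 1 + 1 - 1 = m + 1 := by omega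
  rw [h3]
  have hterm : ∀ j ∈ Finset.range (m + 1),
      h (2 * (m + 1 - 1 - j))
        = (1 / (2 * (m : ℚ) + 1)) * (((2 * m + 1).choose (2 * (1 + j) - 1) : ℚ)
            * bernoulli (2 * m + 2 - 2 * (1 + j)) * (n : ℚ) ^ (2 * (1 + j) - 1)) := by
    intro j hj
    simp only [Finset.mem_range] at hj
    have e1 : 2 * (m + 1 - 1 - j) = 2 * m - 2 * j := by omega
    have e2 : 2 * m + 1 - (2 * m - 2 * j) = 2 * j + 1 := by omega
    have e3 : 2 * (1 + j) - 1 = 2 * j + 1 := by omega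
    have e4 : 2 * m + 2 - 2 * (1 + j) = 2 * m - 2 * j := by omega
    have e5 : (2 * m + 1).choose (2 * m - 2 * j) = (2 * m + 1).choose (2 * j + 1) := by
      rw [show 2 * m - 2 * j = 2 * m + 1 - (2 * j + 1) by omega, Nat.choose_symm (by omega)]
    simp only [hh, e1, e2, e3, e4, e5]
    ring
  rw [Finset.sum_congr rfl hterm, ← Finset.mul_sum]
  ring

theorem stmt_16 (m r n : ℕ) (hm : 1 ≤ m) (hn : 1 ≤ n) :
    S (2 * m) (r + 1) n
      = (1 / 2) * S (2 * m) r n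
        + (1 / (2 * (m : ℚ) + 1)) * ∑ k ∈ Finset.Icc 1 (m + 1),
            ((2 * m + 1).choose (2 * k - 1) : ℚ) * bernoulli (2 * m + 2 - 2 * k)
              * S (2 * k - 1) r n := by
  induction r generalizing n with
  | zero =>
    simp only [S]
    exact base_case m n hm
  | succ r ih =>
    show ∑ i ∈ Finset.Icc 1 n, S (2 * m) (r + 1) i = _
    have hc : ∀ i ∈ Finset.Icc 1 n,
        S (2 * m) (r + 1) i
          = (1 / 2) * S (2 * m) r i
            + (1 / (2 * (m : ℚ) + 1)) * ∑ k ∈ Finset.Icc 1 (m + 1),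
                ((2 * m + 1).choose (2 * k - 1) : ℚ) * bernoulli (2 * m + 2 - 2 * k)
                  * S (2 * k - 1) r i := by
      intro i hi
      simp only [Finset.mem_Icc] at hi
      exact ih i hi.1
    rw [Finset.sum_congr rfl hc, Finset.sum_add_distrib, ← Finset.mul_sum, ← Finset.mul_sum,
      Finset.sum_comm]
    show _ = (1/2) * ∑ i ∈ Finset.Icc 1 n, S (2*m) r i + _
    congr 1
    congr 1
    apply Finset.sum_congr rfl
    intro k _
    rw [← Finset.mul_sum]
    rfl
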